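/- Let n ≥ 1, let 1 ≤ i < j ≤ n be top positions and 1 ≤ k < l ≤ n be bottom positions. Suppose μ and μ' are Brauer diagrams of size n that agree on every edge not incident to any of T_i, T_j, B_k, B_l, and that μ contains the two (crossing) arcs {T_i,B_l} and {T_j,B_k}, while μ' contains the arcs {T_i,B_k} and {T_j,B_l}. Then χ(μ) ≡ χ(μ') + 1 (mod 2), i.e. (−1)^{χ(μ)} = −(−1)^{χ(μ')}. -/

import Mathlib

open Finset

/-- Vertices of a Brauer diagram of size `n`: `Sum.inl i` is the top point `T i`
and `Sum.inr m` is the bottom point `B m` (positions indexed left to right by `Fin n`). -/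
abbrev BVertex (n : ℕ) := Fin n ⊕ Fin n

/-- A Brauer diagram of size `n` is a perfect matching of the `2n` vertices,
encoded as a fixed-point-free involution. -/
def BrauerDiagram (n : ℕ) :=
  {f : Equiv.Perm (BVertex n) // (∀ x, f (f x) = x) ∧ (∀ x, f x ≠ x)}

instance (n : ℕ) : Fintype (BrauerDiagram n) := Subtype.fintype _

/-- An edge of a Brauer diagram: a cup joins two top points, a cap joins two bottom
points, and an arc joins a top point and a bottom point. In `cup i j` and `cap i j`
we maintain `i < j`, and in `arc i m`, `i` is the top position and `m` the bottom one. -/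
inductive BEdge (n : ℕ)
  | cup : Fin n → Fin n → BEdge n
  | cap : Fin n → Fin n → BEdge n
  | arc : Fin n → Fin n → BEdge n
deriving DecidableEq

/-- The canonical edge with endpoints `x` and `y`. -/
def edgeOf {n : ℕ} : BVertex n → BVertex n → BEdge n
  | .inl i, .inl j => .cup (min i j) (max i j)
  | .inr i, .inr j => .cap (min i j) (max i j)
  | .inl i, .inr m => .arc i m
  | .inr m, .inl i => .arc i m

/-- Whether two edges of a Brauer diagram cross. -/
def crosses {n : ℕ} : BEdge n → BEdge n → Bool
  | .cup i j, .cup k l => decide ((i < k ∧ k < j ∧ j < l) ∨ (k < i ∧ i < l ∧ l < j))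
  | .cap i j, .cap k l => decide ((i < k ∧ k < j ∧ j < l) ∨ (k < i ∧ i < l ∧ l < j))
  | .cup _ _, .cap _ _ => false
  | .cap _ _, .cup _ _ => false
  | .cup i j, .arc k _ => decide (i < k ∧ k < j)
  | .arc k _, .cup i j => decide (i < k ∧ k < j)
  | .cap i j, .arc _ m => decide (i < m ∧ m < j)
  | .arc _ m, .cap i j => decide (i < m ∧ m < j)
  | .arc i m, .arc j m' => decide ((i < j ∧ m' < m) ∨ (j < i ∧ m < m'))

/-- The set of edges of a Brauer diagram. -/
def edges {n : ℕ} (μ : BrauerDiagram n) : Finset (BEdge n) :=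
  Finset.univ.image fun x => edgeOf x (μ.1 x)

/-- The crossing number of a Brauer diagram: the number of unordered pairs of
its edges that cross. -/
def crossingNumber {n : ℕ} (μ : BrauerDiagram n) : ℕ :=
  ((edges μ).offDiag.filter fun p => crosses p.1 p.2 = true).card / 2

lemma crosses_symm {n} (a b : BEdge n) : crosses a b = crosses b a := by
  cases a <;> cases b <;> simp only [crosses, decide_eq_decide] <;> tauto

lemma crosses_self {n} (a : BEdge n) : crosses a a = false := by
  cases a <;> simp [crosses] <;> omega

lemma card_cross_insert {n} (a : BEdge n) (s : Finset (BEdge n)) (ha : a ∉ s) :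
    ((insert a s).offDiag.filter fun p => crosses p.1 p.2 = true).card
      = (s.offDiag.filter fun p => crosses p.1 p.2 = true).card
        + 2 * (s.filter fun b => crosses a b = true).card := by
  have hd1 : Disjoint (({a} ×ˢ s).filter fun p => crosses p.1 p.2 = true)
      ((s ×ˢ {a}).filter fun p => crosses p.1 p.2 = true) := by
    apply Finset.disjoint_filter_filter
    simp only [Finset.disjoint_left, Finset.mem_product, Finset.mem_singleton]
    rintro ⟨p1, p2⟩ ⟨u1, u2⟩ ⟨u3, u4⟩
    subst u1; exact ha (u4 ▸ u2)
  have hd2 : Disjoint (s.offDiag.filter fun p => crosses p.1 p.2 = true)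
      ((({a} ×ˢ s) ∪ (s ×ˢ {a})).filter fun p => crosses p.1 p.2 = true) := by
    apply Finset.disjoint_filter_filter
    rw [Finset.disjoint_left]
    rintro ⟨p1, p2⟩ hp hq
    rw [Finset.mem_offDiag] at hp
    rw [Finset.mem_union, Finset.mem_product, Finset.mem_product] at hq
    rcases hq with ⟨u1, u2⟩ | ⟨u1, u2⟩
    · exact ha (Finset.mem_singleton.mp u1 ▸ hp.1)
    · exact ha (Finset.mem_singleton.mp u2 ▸ hp.2.1)
  rw [Finset.offDiag_insert ha, Finset.union_assoc, Finset.filter_union,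
    Finset.card_union_of_disjoint hd2, Finset.filter_union,
    Finset.card_union_of_disjoint hd1]
  have h1 : (({a} ×ˢ s).filter fun p => crosses p.1 p.2 = true)
      = {a} ×ˢ (s.filter fun b => crosses a b = true) := by
    ext p; simp only [Finset.mem_filter, Finset.mem_product, Finset.mem_singleton]
    constructor
    · rintro ⟨⟨u1, u2⟩, u3⟩; subst u1; exact ⟨rfl, u2, u3⟩
    · rintro ⟨u1, u2, u3⟩; subst u1; exact ⟨⟨rfl, u2⟩, u3⟩
  have h2 : ((s ×ˢ {a}).filter fun p => crosses p.1 p.2 = true)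
      = (s.filter fun b => crosses a b = true) ×ˢ {a} := by
    ext p; simp only [Finset.mem_filter, Finset.mem_product, Finset.mem_singleton]
    constructor
    · rintro ⟨⟨u1, u2⟩, u3⟩; subst u2; rw [crosses_symm] at u3; exact ⟨⟨u1, u3⟩, rfl⟩
    · rintro ⟨⟨u1, u3⟩, u2⟩; subst u2; rw [crosses_symm] at u3; exact ⟨⟨u1, rfl⟩, u3⟩
  rw [h1, h2]
  simp [Finset.card_product]
  ring

lemma even_card_cross {n} (s : Finset (BEdge n)) :
    2 ∣ (s.offDiag.filter fun p => crosses p.1 p.2 = true).card := by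
  induction s using Finset.induction with
  | empty => simp
  | @insert a s ha ih => rw [card_cross_insert _ _ ha]; omega

lemma pointwise_parity {n} (i j k l : Fin n) (hij : i < j) (hkl : k < l) (e : BEdge n)
    (harc : ∀ a m, e = .arc a m → a ≠ i ∧ a ≠ j ∧ m ≠ k ∧ m ≠ l) :
    ((if crosses (.arc i l) e = true then 1 else 0)
      + (if crosses (.arc j k) e = true then 1 else 0)) % 2
    = ((if crosses (.arc i k) e = true then 1 else 0)
      + (if crosses (.arc j l) e = true then 1 else 0)) % 2 := by
  cases e with
  | cup a b => simp [crosses]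
  | cap a b => simp only [crosses]; rw [add_comm]; rfl
  | arc a m =>
    obtain ⟨h1, h2, h3, h4⟩ := harc a m rfl
    have v1 : (a:ℕ) ≠ (i:ℕ) := fun h => h1 (Fin.val_injective h)
    have v2 : (a:ℕ) ≠ (j:ℕ) := fun h => h2 (Fin.val_injective h)
    have v3 : (m:ℕ) ≠ (k:ℕ) := fun h => h3 (Fin.val_injective h)
    have v4 : (m:ℕ) ≠ (l:ℕ) := fun h => h4 (Fin.val_injective h)
    have wij : (i:ℕ) < (j:ℕ) := hij
    have wkl : (k:ℕ) < (l:ℕ) := hkl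
    simp only [crosses, decide_eq_true_eq, Fin.lt_def]
    split_ifs <;> omega

lemma arc_mem_aux {n} (μ : BrauerDiagram n) (i j k l : Fin n) (hij : i ≠ j) (hkl : k ≠ l)
    (hk : μ.1 (Sum.inr k) = Sum.inl i ∨ μ.1 (Sum.inr k) = Sum.inl j)
    (hl : μ.1 (Sum.inr l) = Sum.inl i ∨ μ.1 (Sum.inr l) = Sum.inl j)
    (a m : Fin n)
    (hmem : BEdge.arc a m ∈ (Finset.univ.filter fun x : BVertex n =>
      x ≠ Sum.inl i ∧ x ≠ Sum.inl j ∧ x ≠ Sum.inr k ∧ x ≠ Sum.inr l).image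
      fun x => edgeOf x (μ.1 x)) :
    a ≠ i ∧ a ≠ j ∧ m ≠ k ∧ m ≠ l := by
  obtain ⟨x, hx, hfx⟩ := Finset.mem_image.mp hmem
  rw [Finset.mem_filter] at hx
  obtain ⟨-, n1, n2, n3, n4⟩ := hx
  cases x with
  | inl a' =>
    cases hy : μ.1 (Sum.inl a') with
    | inl b => rw [hy] at hfx; simp [edgeOf] at hfx
    | inr m' =>
      rw [hy] at hfx
      simp only [edgeOf, BEdge.arc.injEq] at hfx
      obtain ⟨rfl, rfl⟩ := hfx
      have hk2 : μ.1 (Sum.inr m') = Sum.inl a' := by rw [← hy]; exact μ.2.1 _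
      refine ⟨fun h => n1 (congrArg Sum.inl h), fun h => n2 (congrArg Sum.inl h), ?_, ?_⟩
      · rintro rfl
        rcases hk with h | h
        · exact n1 (hk2.symm.trans h)
        · exact n2 (hk2.symm.trans h)
      · rintro rfl
        rcases hl with h | h
        · exact n1 (hk2.symm.trans h)
        · exact n2 (hk2.symm.trans h)
  | inr m' =>
    cases hy : μ.1 (Sum.inr m') with
    | inr b => rw [hy] at hfx; simp [edgeOf] at hfx
    | inl a' =>
      rw [hy] at hfx
      simp only [edgeOf, BEdge.arc.injEq] at hfx
      obtain ⟨rfl, rfl⟩ := hfx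
      refine ⟨?_, ?_, fun h => n3 (congrArg Sum.inr h), fun h => n4 (congrArg Sum.inr h)⟩
      · rintro rfl
        rcases hk with h | h
        · exact n3 (μ.1.injective (hy.trans h.symm))
        · rcases hl with h2 | h2
          · exact n4 (μ.1.injective (hy.trans h2.symm))
          · exact hkl (Sum.inr_injective (μ.1.injective (h.trans h2.symm)))
      · rintro rfl
        rcases hk with h | h
        · rcases hl with h2 | h2
          · exact hkl (Sum.inr_injective (μ.1.injective (h.trans h2.symm)))
          · exact n4 (μ.1.injective (hy.trans h2.symm))
        · exact n3 (μ.1.injective (hy.trans h.symm))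

/-- Lemma (b): replacing the two crossing arcs `{T_i,B_l}` and `{T_j,B_k}` by the
arcs `{T_i,B_k}` and `{T_j,B_l}`, all other edges remaining the same, changes the
parity of the crossing number. -/
theorem crossing_arcs_to_arcs_parity (n : ℕ) (hn : 1 ≤ n) (i j k l : Fin n)
    (hij : i < j) (hkl : k < l) (μ μ' : BrauerDiagram n)
    (harc1 : μ.1 (Sum.inl i) = Sum.inr l)
    (harc2 : μ.1 (Sum.inl j) = Sum.inr k)
    (harc1' : μ'.1 (Sum.inl i) = Sum.inr k)
    (harc2' : μ'.1 (Sum.inl j) = Sum.inr l)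
    (hagree : ∀ x : BVertex n, x ≠ Sum.inl i → x ≠ Sum.inl j →
      x ≠ Sum.inr k → x ≠ Sum.inr l → μ.1 x = μ'.1 x) :
    (-1 : ℤ) ^ crossingNumber μ = -(-1 : ℤ) ^ crossingNumber μ' := by
  have hbk : μ.1 (Sum.inr k) = Sum.inl j := by rw [← harc2]; exact μ.2.1 _
  have hbl : μ.1 (Sum.inr l) = Sum.inl i := by rw [← harc1]; exact μ.2.1 _
  have hbk' : μ'.1 (Sum.inr k) = Sum.inl i := by rw [← harc1']; exact μ'.2.1 _
  have hbl' : μ'.1 (Sum.inr l) = Sum.inl j := by rw [← harc2']; exact μ'.2.1 _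
  have hijne : i ≠ j := hij.ne
  have hklne : k ≠ l := hkl.ne
  have wij : (i:ℕ) < (j:ℕ) := hij
  have wkl : (k:ℕ) < (l:ℕ) := hkl
  set E0 : Finset (BEdge n) := (Finset.univ.filter fun x : BVertex n =>
      x ≠ Sum.inl i ∧ x ≠ Sum.inl j ∧ x ≠ Sum.inr k ∧ x ≠ Sum.inr l).image
      (fun x => edgeOf x (μ.1 x)) with hE0def
  have hE0' : (Finset.univ.filter fun x : BVertex n =>
      x ≠ Sum.inl i ∧ x ≠ Sum.inl j ∧ x ≠ Sum.inr k ∧ x ≠ Sum.inr l).image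
      (fun x => edgeOf x (μ'.1 x)) = E0 := by
    rw [hE0def]
    apply Finset.image_congr
    intro x hx
    simp only [Finset.coe_filter, Set.mem_setOf_eq] at hx
    exact congrArg (edgeOf x) (hagree x hx.2.1 hx.2.2.1 hx.2.2.2.1 hx.2.2.2.2).symm
  have harcmem : ∀ a m : Fin n, BEdge.arc a m ∈ E0 → a ≠ i ∧ a ≠ j ∧ m ≠ k ∧ m ≠ l :=
    fun a m h => arc_mem_aux μ i j k l hijne hklne (Or.inr hbk) (Or.inl hbl) a m h
  -- decomposition of the edge sets
  have h4set : (Finset.univ.filter fun x : BVertex n =>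
      ¬(x ≠ Sum.inl i ∧ x ≠ Sum.inl j ∧ x ≠ Sum.inr k ∧ x ≠ Sum.inr l))
      = {Sum.inl i, Sum.inl j, Sum.inr k, Sum.inr l} := by
    ext x
    simp only [Finset.mem_filter, Finset.mem_univ, true_and, Finset.mem_insert,
      Finset.mem_singleton, not_and_or, not_not]
  have hsplit : edges μ = insert (BEdge.arc i l) (insert (BEdge.arc j k) E0) := by
    unfold edges
    conv_lhs => rw [← Finset.filter_union_filter_not_eq (fun x : BVertex n =>
      x ≠ Sum.inl i ∧ x ≠ Sum.inl j ∧ x ≠ Sum.inr k ∧ x ≠ Sum.inr l) Finset.univ]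
    rw [Finset.image_union, ← hE0def, h4set]
    ext e
    simp only [Finset.mem_union, Finset.mem_insert, Finset.mem_singleton, Finset.mem_image,
      Finset.image_insert, Finset.image_singleton, harc1, harc2, hbk, hbl, edgeOf]
    tauto
  have hsplit' : edges μ' = insert (BEdge.arc i k) (insert (BEdge.arc j l) E0) := by
    unfold edges
    conv_lhs => rw [← Finset.filter_union_filter_not_eq (fun x : BVertex n =>
      x ≠ Sum.inl i ∧ x ≠ Sum.inl j ∧ x ≠ Sum.inr k ∧ x ≠ Sum.inr l) Finset.univ]
    rw [Finset.image_union, hE0', h4set]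
    ext e
    simp only [Finset.mem_union, Finset.mem_insert, Finset.mem_singleton, Finset.mem_image,
      Finset.image_insert, Finset.image_singleton, harc1', harc2', hbk', hbl', edgeOf]
    tauto
  have he2 : BEdge.arc j k ∉ E0 := fun h => (harcmem j k h).2.1 rfl
  have he1 : BEdge.arc i l ∉ insert (BEdge.arc j k) E0 := by
    simp only [Finset.mem_insert, BEdge.arc.injEq]
    rintro (⟨h1, -⟩ | h)
    · exact hijne h1
    · exact (harcmem i l h).1 rfl
  have he2' : BEdge.arc j l ∉ E0 := fun h => (harcmem j l h).2.1 rfl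
  have he1' : BEdge.arc i k ∉ insert (BEdge.arc j l) E0 := by
    simp only [Finset.mem_insert, BEdge.arc.injEq]
    rintro (⟨h1, -⟩ | h)
    · exact hijne h1
    · exact (harcmem i k h).1 rfl
  have c1 : ((edges μ).offDiag.filter fun p => crosses p.1 p.2 = true).card
      = (E0.offDiag.filter fun p => crosses p.1 p.2 = true).card
        + 2 * ((E0.filter fun b => crosses (BEdge.arc i l) b = true).card
          + (E0.filter fun b => crosses (BEdge.arc j k) b = true).card + 1) := by
    rw [hsplit, card_cross_insert _ _ he1, card_cross_insert _ _ he2]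
    have hcr : crosses (BEdge.arc i l) (BEdge.arc j k) = true := by
      simp only [crosses, decide_eq_true_eq]
      exact Or.inl ⟨hij, hkl⟩
    rw [Finset.filter_insert, if_pos hcr,
      Finset.card_insert_of_notMem (fun h => he2 (Finset.mem_filter.mp h).1)]
    ring
  have c1' : ((edges μ').offDiag.filter fun p => crosses p.1 p.2 = true).card
      = (E0.offDiag.filter fun p => crosses p.1 p.2 = true).card
        + 2 * ((E0.filter fun b => crosses (BEdge.arc i k) b = true).card
          + (E0.filter fun b => crosses (BEdge.arc j l) b = true).card) := by
    rw [hsplit', card_cross_insert _ _ he1', card_cross_insert _ _ he2']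
    have hcr : ¬(crosses (BEdge.arc i k) (BEdge.arc j l) = true) := by
      simp only [crosses, decide_eq_true_eq, Fin.lt_def]
      omega
    rw [Finset.filter_insert, if_neg hcr]
    ring
  have hBpar : ((E0.filter fun b => crosses (BEdge.arc i l) b = true).card
      + (E0.filter fun b => crosses (BEdge.arc j k) b = true).card) % 2
    = ((E0.filter fun b => crosses (BEdge.arc i k) b = true).card
      + (E0.filter fun b => crosses (BEdge.arc j l) b = true).card) % 2 := by
    rw [Finset.card_filter, Finset.card_filter, Finset.card_filter, Finset.card_filter,
      ← Finset.sum_add_distrib, ← Finset.sum_add_distrib, Finset.sum_nat_mod,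
      Finset.sum_nat_mod E0 2 (fun b => (if crosses (BEdge.arc i k) b = true then 1 else 0)
        + if crosses (BEdge.arc j l) b = true then 1 else 0)]
    congr 1
    apply Finset.sum_congr rfl
    intro e he
    exact pointwise_parity i j k l hij hkl e (fun a m hm => harcmem a m (hm ▸ he))
  have hY := even_card_cross E0
  have hm : crossingNumber μ = (E0.offDiag.filter fun p => crosses p.1 p.2 = true).card / 2
      + ((E0.filter fun b => crosses (BEdge.arc i l) b = true).card
        + (E0.filter fun b => crosses (BEdge.arc j k) b = true).card) + 1 := by
    unfold crossingNumber
    omega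
  have hm' : crossingNumber μ' = (E0.offDiag.filter fun p => crosses p.1 p.2 = true).card / 2
      + ((E0.filter fun b => crosses (BEdge.arc i k) b = true).card
        + (E0.filter fun b => crosses (BEdge.arc j l) b = true).card) := by
    unfold crossingNumber
    omega
  have hodd : Odd (crossingNumber μ + crossingNumber μ') := by
    rw [hm, hm', Nat.odd_iff]
    omega
  have key : (-1:ℤ) ^ (crossingNumber μ) * (-1) ^ (crossingNumber μ') = -1 := by
    rw [← pow_add]
    exact hodd.neg_one_pow
  have h2 : ((-1:ℤ)) ^ (crossingNumber μ') * (-1) ^ (crossingNumber μ') = 1 := by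
    rw [← pow_add]
    exact (Even.add_self _).neg_one_pow
  calc (-1:ℤ) ^ crossingNumber μ
      = ((-1:ℤ) ^ crossingNumber μ * (-1) ^ crossingNumber μ') * (-1) ^ crossingNumber μ' := by
        rw [mul_assoc, h2, mul_one]
    _ = -(-1:ℤ) ^ crossingNumber μ' := by rw [key]; ring
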